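/- arXiv:1702.07580 — 2 statements merged into one kernel-verified Lean document; each statement's English description precedes it below -/
import Mathlib

section
/- Let P be symmetric positive definite, Ā ∈ ℝ^{n×n} with P·Ā + Āᵀ·P ⪯ −γ·I, P ⪯ t·I, and 2·t·δ_max < γ for some t, γ > 0. Then for every diagonal matrix D with diagonal entries in [0, δ_max], the matrix A = Ā − D satisfies P·A + Aᵀ·P ≺ 0, and hence A is Hurwitz stable. -/
open Matrix
open scoped ComplexOrder

private lemma dot_map_ofReal {n : ℕ} (Q : Matrix (Fin n) (Fin n) ℝ) (hQs : Qᵀ = Q) (v : Fin n → ℂ) :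
    star v ⬝ᵥ ((Q.map Complex.ofReal) *ᵥ v) =
      Complex.ofReal ((fun k => (v k).re) ⬝ᵥ (Q *ᵥ fun k => (v k).re)
        + (fun k => (v k).im) ⬝ᵥ (Q *ᵥ fun k => (v k).im)) := by
  have hsym : ∀ j k, Q j k = Q k j := fun j k => (congrFun (congrFun hQs j) k).symm
  apply Complex.ext
  · simp only [dotProduct, mulVec, Pi.star_apply, map_apply, Finset.mul_sum,
      Complex.re_sum, Complex.ofReal_re, Complex.mul_re, Complex.mul_im, Complex.ofReal_im,
      Complex.star_def, Complex.conj_re, Complex.conj_im, ← Finset.sum_add_distrib]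
    apply Finset.sum_congr rfl; intro j _
    apply Finset.sum_congr rfl; intro k _
    ring
  · simp only [dotProduct, mulVec, Pi.star_apply, map_apply, Finset.mul_sum,
      Complex.im_sum, Complex.ofReal_im, Complex.mul_im, Complex.mul_re,
      Complex.star_def, Complex.conj_re, Complex.conj_im]
    have key : ∑ j, ∑ k, Q j k * ((v j).re * (v k).im - (v j).im * (v k).re) = 0 := by
      have h1 : ∑ j, ∑ k, Q j k * ((v j).re * (v k).im - (v j).im * (v k).re)
          = -∑ j, ∑ k, Q j k * ((v j).re * (v k).im - (v j).im * (v k).re) := by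
        conv_lhs => rw [Finset.sum_comm]
        rw [← Finset.sum_neg_distrib]
        apply Finset.sum_congr rfl; intro k _
        rw [← Finset.sum_neg_distrib]
        apply Finset.sum_congr rfl; intro j _
        rw [hsym j k]; ring
      linarith
    refine Eq.trans ?_ key
    apply Finset.sum_congr rfl; intro j _
    apply Finset.sum_congr rfl; intro k _
    simp only [Complex.ofReal_re]; ring

private lemma posDef_map_ofReal {n : ℕ} {Q : Matrix (Fin n) (Fin n) ℝ} (hQ : Q.PosDef) :
    (Q.map Complex.ofReal).PosDef := by
  have hQs : Qᵀ = Q := by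
    have h := hQ.1
    rwa [Matrix.IsHermitian, conjTranspose_eq_transpose_of_trivial] at h
  refine posDef_iff_dotProduct_mulVec.mpr ⟨?_, ?_⟩
  · ext i j
    simp only [conjTranspose_apply, map_apply, Complex.star_def, Complex.conj_ofReal]
    exact congrArg _ ((congrFun (congrFun hQs i) j).symm : Q i j = Q j i).symm
  · intro v hv
    rw [dot_map_ofReal Q hQs v, Complex.zero_lt_real]
    have ha : ∀ (w : Fin n → ℝ), 0 ≤ w ⬝ᵥ (Q *ᵥ w) := fun w => by
      simpa using hQ.posSemidef.dotProduct_mulVec_nonneg w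
    have hb : ∀ (w : Fin n → ℝ), w ≠ 0 → 0 < w ⬝ᵥ (Q *ᵥ w) := fun w hw => by
      simpa using hQ.dotProduct_mulVec_pos hw
    rcases eq_or_ne (fun k => (v k).re) 0 with h1 | h1
    · have h2 : (fun k => (v k).im) ≠ 0 := by
        intro h2
        apply hv
        funext k
        exact Complex.ext (congrFun h1 k) (congrFun h2 k)
      have := hb _ h2
      have := ha (fun k => (v k).re)
      linarith
    · have := hb _ h1
      have := ha (fun k => (v k).im)
      linarith

private lemma part1_posDef {n : ℕ} (P Abar : Matrix (Fin n) (Fin n) ℝ)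
    (hP : P.IsHermitian) (hPpd : P.PosDef)
    (t γ δmax : ℝ) (ht : 0 < t) (hγ : 0 < γ) (hδmax : 0 < δmax)
    (hLyap : (-(γ : ℝ) • (1 : Matrix (Fin n) (Fin n) ℝ)
        - (P * Abar + Abarᵀ * P)).PosSemidef)
    (hPt : ((t : ℝ) • (1 : Matrix (Fin n) (Fin n) ℝ) - P).PosSemidef)
    (hbnd : 2 * t * δmax < γ)
    (d : Fin n → ℝ) (hd : ∀ k, d k ∈ Set.Icc (0 : ℝ) δmax) :
    (-(P * (Abar - Matrix.diagonal d) + (Abar - Matrix.diagonal d)ᵀ * P)).PosDef := by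
  have hPs : Pᵀ = P := by
    have h := hP; rwa [Matrix.IsHermitian, conjTranspose_eq_transpose_of_trivial] at h
  set D : Matrix (Fin n) (Fin n) ℝ := Matrix.diagonal d with hD
  set A : Matrix (Fin n) (Fin n) ℝ := Abar - D with hA
  set N : Matrix (Fin n) (Fin n) ℝ :=
    -(γ : ℝ) • (1 : Matrix (Fin n) (Fin n) ℝ) - (P * Abar + Abarᵀ * P) with hN
  have hNg : N + γ • (1 : Matrix (Fin n) (Fin n) ℝ) = -(P * Abar + Abarᵀ * P) := by
    rw [hN]; module
  have hDs : Dᵀ = D := by rw [hD]; exact Matrix.diagonal_transpose d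
  have hMeq : -(P * A + Aᵀ * P) = N + γ • (1 : Matrix (Fin n) (Fin n) ℝ) + (P * D + D * P) := by
    rw [hNg, hA]
    simp only [Matrix.mul_sub, Matrix.sub_mul, Matrix.transpose_sub, hDs]
    abel
  refine posDef_iff_dotProduct_mulVec.mpr ⟨?_, ?_⟩
  · -- Hermitian
    rw [Matrix.IsHermitian, conjTranspose_eq_transpose_of_trivial]
    simp only [Matrix.transpose_neg, Matrix.transpose_add, Matrix.transpose_mul,
      Matrix.transpose_transpose, hPs]
    abel
  · intro x hx
    rw [hMeq]
    have hsymm : ∀ u w : Fin n → ℝ, u ⬝ᵥ (P *ᵥ w) = w ⬝ᵥ (P *ᵥ u) := by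
      intro u w
      rw [Matrix.dotProduct_mulVec, ← hPs, Matrix.vecMul_transpose, dotProduct_comm, hPs]
    set y : Fin n → ℝ := D *ᵥ x with hy
    have hDvec : x ᵥ* D = D *ᵥ x := by
      funext i
      simp [hD, Matrix.vecMul_diagonal, Matrix.mulVec_diagonal, mul_comm]
    have expand : star x ⬝ᵥ ((N + γ • (1 : Matrix (Fin n) (Fin n) ℝ) + (P * D + D * P)) *ᵥ x)
        = x ⬝ᵥ (N *ᵥ x) + γ * (x ⬝ᵥ x) + (x ⬝ᵥ (P *ᵥ y) + (y ⬝ᵥ (P *ᵥ x))) := by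
      simp only [star_trivial, Matrix.add_mulVec, Matrix.smul_mulVec, Matrix.one_mulVec,
        dotProduct_add, dotProduct_smul, ← Matrix.mulVec_mulVec, smul_eq_mul, hy]
      congr 1
      rw [Matrix.dotProduct_mulVec x D, hDvec]
    rw [expand]
    -- scalar facts
    have hNx : 0 ≤ x ⬝ᵥ (N *ᵥ x) := by simpa using hLyap.dotProduct_mulVec_nonneg x
    have hs : 0 < x ⬝ᵥ x := by
      have h0 : 0 ≤ x ⬝ᵥ x := Finset.sum_nonneg fun i _ => mul_self_nonneg (x i)
      exact h0.lt_of_ne fun h => hx (dotProduct_self_eq_zero.mp h.symm)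
    have hPle : ∀ w : Fin n → ℝ, w ⬝ᵥ (P *ᵥ w) ≤ t * (w ⬝ᵥ w) := by
      intro w
      have h := hPt.dotProduct_mulVec_nonneg w
      simp only [star_trivial, Matrix.sub_mulVec, Matrix.smul_mulVec, Matrix.one_mulVec,
        dotProduct_sub, dotProduct_smul, smul_eq_mul] at h
      linarith
    have hPx := hPle x
    have hPy := hPle y
    have hyy : y ⬝ᵥ y ≤ δmax ^ 2 * (x ⬝ᵥ x) := by
      simp only [dotProduct, hy, hD, Matrix.mulVec_diagonal, Finset.mul_sum]
      apply Finset.sum_le_sum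
      intro i _
      have h1 := (hd i).1
      have h2 := (hd i).2
      have h3 : d i * d i ≤ δmax * δmax := mul_le_mul h2 h2 h1 hδmax.le
      nlinarith [mul_self_nonneg (x i), h3]
    have hz : 0 ≤ (δmax • x + y) ⬝ᵥ (P *ᵥ (δmax • x + y)) := by
      simpa using hPpd.posSemidef.dotProduct_mulVec_nonneg (δmax • x + y)
    have hz' : 0 ≤ δmax ^ 2 * (x ⬝ᵥ (P *ᵥ x)) + 2 * δmax * (x ⬝ᵥ (P *ᵥ y)) + y ⬝ᵥ (P *ᵥ y) := by
      have hexp : (δmax • x + y) ⬝ᵥ (P *ᵥ (δmax • x + y))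
          = δmax ^ 2 * (x ⬝ᵥ (P *ᵥ x)) + 2 * δmax * (x ⬝ᵥ (P *ᵥ y)) + y ⬝ᵥ (P *ᵥ y) := by
        rw [Matrix.mulVec_add, Matrix.mulVec_smul]
        simp only [dotProduct_add, add_dotProduct, smul_dotProduct,
          dotProduct_smul, smul_eq_mul]
        rw [hsymm y x]
        ring
      linarith [hexp ▸ hz]
    rw [hsymm y x]
    have key : 0 < δmax * (x ⬝ᵥ (N *ᵥ x) + γ * (x ⬝ᵥ x)
        + (x ⬝ᵥ (P *ᵥ y) + x ⬝ᵥ (P *ᵥ y))) := by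
      nlinarith [mul_le_mul_of_nonneg_left hPx (le_of_lt (mul_pos hδmax hδmax)),
        mul_le_mul_of_nonneg_left hyy (le_of_lt ht),
        mul_lt_mul_of_pos_right hbnd (mul_pos hδmax hs),
        mul_pos hδmax hs, mul_nonneg (le_of_lt hδmax) hNx]
    nlinarith [key, hδmax, mul_pos hδmax hs]


private lemma part2_spectrum {n : ℕ} (P A : Matrix (Fin n) (Fin n) ℝ)
    (hPpd : P.PosDef) (hM : (-(P * A + Aᵀ * P)).PosDef)
    (μ : ℂ) (hμ : μ ∈ spectrum ℂ (A.map Complex.ofReal)) : μ.re < 0 := by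
  set B : Matrix (Fin n) (Fin n) ℂ := A.map Complex.ofReal with hB
  -- get eigenvector
  rw [← AlgEquiv.spectrum_eq (Matrix.toLinAlgEquiv' : Matrix (Fin n) (Fin n) ℂ ≃ₐ[ℂ]
      _) B, ← Module.End.hasEigenvalue_iff_mem_spectrum] at hμ
  obtain ⟨v, hv⟩ := hμ.exists_hasEigenvector
  have hv0 : v ≠ 0 := hv.right
  have hvB : B *ᵥ v = μ • v := by
    simpa [Matrix.toLinAlgEquiv'_apply, Matrix.toLin'_apply] using hv.apply_eq_smul
  set Pc : Matrix (Fin n) (Fin n) ℂ := P.map Complex.ofReal with hPc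
  set c : ℂ := star v ⬝ᵥ (Pc *ᵥ v) with hc
  have hcpos : 0 < c := (posDef_map_ofReal hPpd).dotProduct_mulVec_pos hv0
  have hMc : ((-(P * A + Aᵀ * P)).map Complex.ofReal).PosDef := posDef_map_ofReal hM
  have hmpos : 0 < star v ⬝ᵥ (((-(P * A + Aᵀ * P)).map Complex.ofReal) *ᵥ v) := hMc.dotProduct_mulVec_pos hv0
  have hmap : (-(P * A + Aᵀ * P)).map Complex.ofReal
      = -(Pc * B + Bᵀ * Pc) := by
    have h2 : (Aᵀ).map Complex.ofReal = Bᵀ := by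
      ext i j; simp [hB]
    show Complex.ofRealHom.mapMatrix (-(P * A + Aᵀ * P)) = _
    rw [map_neg, map_add, _root_.map_mul, _root_.map_mul]
    show -((P.map Complex.ofReal) * (A.map Complex.ofReal)
        + ((Aᵀ).map Complex.ofReal) * (P.map Complex.ofReal)) = _
    rw [h2, ← hPc, ← hB]
  -- compute the quadratic form
  have hdot : star v ⬝ᵥ ((-(Pc * B + Bᵀ * Pc)) *ᵥ v) = -(μ + (starRingEnd ℂ) μ) * c := by
    have hBt : star v ⬝ᵥ ((Bᵀ * Pc) *ᵥ v) = (starRingEnd ℂ) μ * c := by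
      rw [← Matrix.mulVec_mulVec, Matrix.dotProduct_mulVec _ Bᵀ, Matrix.vecMul_transpose]
      have hBstar : B *ᵥ star v = star (B *ᵥ v) := by
        funext i
        simp only [Matrix.mulVec, dotProduct, Pi.star_apply, star_sum, star_mul',
          hB, Matrix.map_apply, Complex.star_def, Complex.conj_ofReal]
      rw [hBstar, hvB, star_smul, smul_dotProduct, hc, smul_eq_mul, starRingEnd_apply]
    have hPB : star v ⬝ᵥ ((Pc * B) *ᵥ v) = μ * c := by
      rw [← Matrix.mulVec_mulVec, hvB, Matrix.mulVec_smul, dotProduct_smul, hc,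
        smul_eq_mul]
    rw [Matrix.neg_mulVec, dotProduct_neg, Matrix.add_mulVec, dotProduct_add,
      hPB, hBt]
    ring
  rw [hmap, hdot] at hmpos
  rw [Complex.lt_def] at hmpos hcpos
  obtain ⟨hmre, -⟩ := hmpos
  obtain ⟨hcre, hcim⟩ := hcpos
  rw [Complex.add_conj] at hmre
  simp only [Complex.zero_re, Complex.neg_re, Complex.mul_re, Complex.ofReal_re,
    Complex.ofReal_im, ← hcim, Complex.zero_im] at hmre hcre
  nlinarith [hmre, hcre]

theorem stmt4 {n : ℕ} (P Abar : Matrix (Fin n) (Fin n) ℝ)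
    (hP : P.IsHermitian) (hPpd : P.PosDef)
    (t γ δmax : ℝ) (ht : 0 < t) (hγ : 0 < γ) (hδmax : 0 < δmax)
    (hLyap : (-(γ : ℝ) • (1 : Matrix (Fin n) (Fin n) ℝ)
        - (P * Abar + Abarᵀ * P)).PosSemidef)
    (hPt : ((t : ℝ) • (1 : Matrix (Fin n) (Fin n) ℝ) - P).PosSemidef)
    (hbnd : 2 * t * δmax < γ)
    (d : Fin n → ℝ) (hd : ∀ k, d k ∈ Set.Icc (0 : ℝ) δmax) :
    (-(P * (Abar - Matrix.diagonal d) + (Abar - Matrix.diagonal d)ᵀ * P)).PosDef ∧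
      (∀ μ ∈ spectrum ℂ ((Abar - Matrix.diagonal d).map (Complex.ofReal)), μ.re < 0) := by
  have h1 := part1_posDef P Abar hP hPpd t γ δmax ht hγ hδmax hLyap hPt hbnd d hd
  exact ⟨h1, fun μ hμ => part2_spectrum P (Abar - Matrix.diagonal d) hPpd h1 μ hμ⟩
end

section
/- Let P = Pᵀ ≻ 0, Ā ∈ ℝ^{n×n} with P·Ā + Āᵀ·P ⪯ −γ₀·I for γ₀ > 0, and suppose for each k = 1,…,n there exist γ_k > 0, η_k > 0 with Σ_k η_k = γ₀ and δ̄_k·(P·D_k + D_k·P) ⪰ (γ_k − η_k)·I, where D_k is the diagonal matrix with 1 in position (k,k) and 0 elsewhere and δ̄_k > 0. Then for every diagonal matrix D = Σ_k δ_k·D_k with δ_k ∈ [0, δ̄_k], the matrix Ā − D satisfies P·(Ā−D) + (Ā−D)ᵀ·P ≺ 0 and is Hurwitz stable. -/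
open Matrix

section helpers
variable {n : ℕ}

private lemma psd_smul' {c : ℝ} (hc : 0 ≤ c) {M : Matrix (Fin n) (Fin n) ℝ} (h : M.PosSemidef) :
    (c • M).PosSemidef := by
  refine Matrix.PosSemidef.of_dotProduct_mulVec_nonneg ?_ fun x => ?_
  · unfold Matrix.IsHermitian
    rw [conjTranspose_smul, h.1]; simp
  · rw [smul_mulVec, dotProduct_smul, smul_eq_mul]
    exact mul_nonneg hc (h.dotProduct_mulVec_nonneg x)

private lemma pd_smul' {c : ℝ} (hc : 0 < c) {M : Matrix (Fin n) (Fin n) ℝ} (h : M.PosDef) :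
    (c • M).PosDef := by
  refine Matrix.PosDef.of_dotProduct_mulVec_pos ?_ fun x hx => ?_
  · unfold Matrix.IsHermitian
    rw [conjTranspose_smul, h.1]; simp
  · rw [smul_mulVec, dotProduct_smul, smul_eq_mul]
    exact mul_pos hc (h.dotProduct_mulVec_pos hx)

private lemma psd_sum' {F : Fin n → Matrix (Fin n) (Fin n) ℝ}
    (h : ∀ k, (F k).PosSemidef) : (∑ k, F k).PosSemidef := by
  classical
  induction (Finset.univ : Finset (Fin n)) using Finset.induction_on with
  | empty => simpa using Matrix.PosSemidef.zero
  | insert _ _ hk ih =>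
    rw [Finset.sum_insert hk]
    exact (h _).add ih

private lemma re_quad (M : Matrix (Fin n) (Fin n) ℝ) (v : Fin n → ℂ) :
    (star v ⬝ᵥ (M.map Complex.ofReal) *ᵥ v).re
      = (fun i => (v i).re) ⬝ᵥ M *ᵥ (fun i => (v i).re)
        + (fun i => (v i).im) ⬝ᵥ M *ᵥ (fun i => (v i).im) := by
  simp only [dotProduct, mulVec, Matrix.map_apply, Pi.star_apply]
  rw [Complex.re_sum, ← Finset.sum_add_distrib]
  refine Finset.sum_congr rfl fun j _ => ?_
  rw [Finset.mul_sum, Complex.re_sum, Finset.mul_sum, Finset.mul_sum, ← Finset.sum_add_distrib]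
  refine Finset.sum_congr rfl fun k _ => ?_
  simp [Complex.mul_re, Complex.mul_im]

private lemma pd_map_quad {M : Matrix (Fin n) (Fin n) ℝ} (h : M.PosDef)
    (v : Fin n → ℂ) (hv : v ≠ 0) :
    0 < (star v ⬝ᵥ (M.map Complex.ofReal) *ᵥ v).re := by
  rw [re_quad]
  set x : Fin n → ℝ := fun i => (v i).re with hx
  set y : Fin n → ℝ := fun i => (v i).im with hy
  have hxy : x ≠ 0 ∨ y ≠ 0 := by
    by_contra hc
    push_neg at hc
    exact hv (funext fun i => Complex.ext (congrFun hc.1 i) (congrFun hc.2 i))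
  rcases hxy with hx0 | hy0
  · have h1 := h.dotProduct_mulVec_pos hx0
    have h2 := h.posSemidef.dotProduct_mulVec_nonneg y
    simp only [star_trivial] at h1 h2
    linarith
  · have h1 := h.dotProduct_mulVec_pos hy0
    have h2 := h.posSemidef.dotProduct_mulVec_nonneg x
    simp only [star_trivial] at h1 h2
    linarith

end helpers

theorem stmt8 {n : ℕ} (P Abar : Matrix (Fin n) (Fin n) ℝ)
    (hP : P.IsHermitian) (hPpd : P.PosDef)
    (γ₀ : ℝ) (hγ₀ : 0 < γ₀)
    (hLyap : (-(γ₀ : ℝ) • (1 : Matrix (Fin n) (Fin n) ℝ)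
        - (P * Abar + Abarᵀ * P)).PosSemidef)
    (γ η δbar : Fin n → ℝ)
    (hγ : ∀ k, 0 < γ k) (hη : ∀ k, 0 < η k) (hδbar : ∀ k, 0 < δbar k)
    (hsum : ∑ k, η k = γ₀)
    (hLMI : ∀ k, (δbar k •
        (P * Matrix.single k k (1 : ℝ) + Matrix.single k k (1 : ℝ) * P)
        - (γ k - η k) • (1 : Matrix (Fin n) (Fin n) ℝ)).PosSemidef)
    (δ : Fin n → ℝ) (hδ : ∀ k, 0 ≤ δ k ∧ δ k ≤ δbar k) :
    (-(P * (Abar - Matrix.diagonal δ) + (Abar - Matrix.diagonal δ)ᵀ * P)).PosDef ∧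
      (∀ μ ∈ spectrum ℂ ((Abar - Matrix.diagonal δ).map (Complex.ofReal)), μ.re < 0) := by
  classical
  set E : Fin n → Matrix (Fin n) (Fin n) ℝ := fun k => Matrix.single k k (1 : ℝ) with hE
  set t : Fin n → ℝ := fun k => δ k / δbar k with htdef
  have ht0 : ∀ k, 0 ≤ t k := fun k => div_nonneg (hδ k).1 (hδbar k).le
  have ht1 : ∀ k, t k ≤ 1 := fun k => (div_le_one (hδbar k)).mpr (hδ k).2
  have htδ : ∀ k, t k * δbar k = δ k := fun k => div_mul_cancel₀ _ (hδbar k).ne'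
  -- diagonal as sum of basis matrices
  have hD : Matrix.diagonal δ = ∑ k, δ k • E k := by
    ext i j
    simp only [Matrix.sum_apply, Matrix.smul_apply, hE, Matrix.single, Matrix.of_apply,
      Matrix.diagonal_apply, smul_eq_mul, mul_ite, mul_one, mul_zero, ite_and]
    by_cases h : i = j
    · subst h; simp
    · simp [h, Finset.sum_ite_eq]
  set c : ℝ := ∑ k, (η k + t k * (γ k - η k)) with hc
  have hkey : -(P * (Abar - Matrix.diagonal δ) + (Abar - Matrix.diagonal δ)ᵀ * P)
      = (-(γ₀ : ℝ) • (1 : Matrix (Fin n) (Fin n) ℝ) - (P * Abar + Abarᵀ * P))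
        + (∑ k, t k • (δbar k • (P * E k + E k * P)
            - (γ k - η k) • (1 : Matrix (Fin n) (Fin n) ℝ)))
        + c • (1 : Matrix (Fin n) (Fin n) ℝ) := by
    have h2 : P * Matrix.diagonal δ + Matrix.diagonal δ * P = ∑ k, δ k • (P * E k + E k * P) := by
      rw [hD, Finset.mul_sum, Finset.sum_mul, ← Finset.sum_add_distrib]
      simp [mul_smul_comm, smul_mul_assoc, smul_add]
    have h1 : (∑ k, t k • (δbar k • (P * E k + E k * P)
          - (γ k - η k) • (1 : Matrix (Fin n) (Fin n) ℝ)))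
        = (P * Matrix.diagonal δ + Matrix.diagonal δ * P)
          - (∑ k, t k * (γ k - η k)) • (1 : Matrix (Fin n) (Fin n) ℝ) := by
      rw [h2, Finset.sum_smul, ← Finset.sum_sub_distrib]
      refine Finset.sum_congr rfl fun k _ => ?_
      rw [smul_sub, smul_smul, smul_smul, htδ]
    have h3 : c • (1 : Matrix (Fin n) (Fin n) ℝ)
        = γ₀ • (1 : Matrix (Fin n) (Fin n) ℝ)
          + (∑ k, t k * (γ k - η k)) • (1 : Matrix (Fin n) (Fin n) ℝ) := by
      rw [hc, Finset.sum_add_distrib, hsum, add_smul]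
    rw [h1, h3, transpose_sub, diagonal_transpose, mul_sub, sub_mul]
    module
  have hpos : ∀ k, 0 < η k + t k * (γ k - η k) := by
    intro k
    rcases eq_or_lt_of_le (ht1 k) with h | h
    · rw [h]; nlinarith [hγ k]
    · nlinarith [mul_pos (sub_pos.mpr h) (hη k), mul_nonneg (ht0 k) (hγ k).le]
  have hpd : (-(P * (Abar - Matrix.diagonal δ) + (Abar - Matrix.diagonal δ)ᵀ * P)).PosDef := by
    rw [hkey]
    rcases Nat.eq_zero_or_pos n with hn | hn
    · subst hn
      refine ⟨?_, fun x hx => ?_⟩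
      · ext i j; exact i.elim0
      · exact absurd (Subsingleton.elim _ _) hx
    · have hcpos : 0 < c := by
        rw [hc]
        exact Finset.sum_pos (fun k _ => hpos k) (Finset.univ_nonempty_iff.mpr ⟨⟨0, hn⟩⟩)
      exact Matrix.PosDef.posSemidef_add
        (hLyap.add (psd_sum' fun k => psd_smul' (ht0 k) (hLMI k)))
        (pd_smul' hcpos Matrix.PosDef.one)
  refine ⟨hpd, ?_⟩
  intro μ hμ
  set A : Matrix (Fin n) (Fin n) ℝ := Abar - Matrix.diagonal δ with hA
  set Ac : Matrix (Fin n) (Fin n) ℂ := A.map Complex.ofReal with hAc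
  set Pc : Matrix (Fin n) (Fin n) ℂ := P.map Complex.ofReal with hPc
  rw [spectrum.mem_iff] at hμ
  have hdet : (algebraMap ℂ (Matrix (Fin n) (Fin n) ℂ) μ - Ac).det = 0 := by
    by_contra h
    exact hμ ((Matrix.isUnit_iff_isUnit_det _).mpr (Ne.isUnit h))
  obtain ⟨v, hvne, hveq0⟩ := Matrix.exists_mulVec_eq_zero_iff.mpr hdet
  have heig : Ac *ᵥ v = μ • v := by
    have h1 : (algebraMap ℂ (Matrix (Fin n) (Fin n) ℂ) μ - Ac) *ᵥ v
        = μ • v - Ac *ᵥ v := by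
      rw [Matrix.sub_mulVec, Algebra.algebraMap_eq_smul_one, smul_mulVec, one_mulVec]
    rw [h1] at hveq0
    exact (sub_eq_zero.mp hveq0).symm
  have hAH : Acᴴ = Aᵀ.map Complex.ofReal := by
    ext i j
    simp [hAc, Matrix.conjTranspose_apply, Matrix.map_apply, Matrix.transpose_apply,
      Complex.conj_ofReal]
  have hMc : ((-(P * A + Aᵀ * P)).map Complex.ofReal) = -(Pc * Ac + Acᴴ * Pc) := by
    rw [hAH, hPc, hAc]
    ext i j
    simp only [Matrix.map_apply, Matrix.neg_apply, Matrix.add_apply, Matrix.mul_apply]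
    push_cast
    ring
  have hm : 0 < (star v ⬝ᵥ ((-(P * A + Aᵀ * P)).map Complex.ofReal) *ᵥ v).re :=
    pd_map_quad hpd v hvne
  have hp : 0 < (star v ⬝ᵥ Pc *ᵥ v).re := pd_map_quad hPpd v hvne
  have e1 : star v ⬝ᵥ ((Pc * Ac) *ᵥ v) = μ * (star v ⬝ᵥ Pc *ᵥ v) := by
    rw [← Matrix.mulVec_mulVec, heig, Matrix.mulVec_smul, dotProduct_smul, smul_eq_mul]
  have e2 : star v ⬝ᵥ ((Acᴴ * Pc) *ᵥ v) = (starRingEnd ℂ) μ * (star v ⬝ᵥ Pc *ᵥ v) := by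
    rw [← Matrix.mulVec_mulVec, Matrix.dotProduct_mulVec, ← Matrix.star_mulVec, heig,
      star_smul, smul_dotProduct, smul_eq_mul]
    rfl
  have hql : star v ⬝ᵥ ((-(P * A + Aᵀ * P)).map Complex.ofReal) *ᵥ v
      = -(((2 * μ.re : ℝ) : ℂ) * (star v ⬝ᵥ Pc *ᵥ v)) := by
    rw [hMc, Matrix.neg_mulVec, dotProduct_neg, Matrix.add_mulVec, dotProduct_add, e1, e2,
      ← add_mul, Complex.add_conj]
  rw [hql] at hm
  simp only [Complex.neg_re, Complex.mul_re, Complex.ofReal_re, Complex.ofReal_im,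
    zero_mul, sub_zero] at hm
  nlinarith
end
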